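/- Let L, T, H, U be positive real numbers and define F(γ) = min( T, L + γT + UH/γ + √(UHL/γ) ) for γ ∈ (0,1]. If L ≤ (U+1)√(HT), then for γ* = min(√(H/T), 1) one has F(γ*) ≤ L + 3(U+1)√(HT). -/

import Mathlib

theorem fallback_tuning_large_loss
    (L T H U : ℝ) (hL : 0 < L) (hT : 0 < T) (hH : 0 < H) (hU : 0 < U)
    (F : ℝ → ℝ)
    (hF : ∀ γ, F γ = min T (L + γ * T + U * H / γ + Real.sqrt (U * H * L / γ)))
    (hcond : L ≤ (U + 1) * Real.sqrt (H * T)) :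
    F (min (Real.sqrt (H / T)) 1) ≤ L + 3 * (U + 1) * Real.sqrt (H * T) := by
  set s := Real.sqrt (H * T) with hs
  have hs0 : 0 < s := Real.sqrt_pos.2 (by positivity)
  have hs2 : s ^ 2 = H * T := Real.sq_sqrt (by positivity)
  rcases le_or_gt (Real.sqrt (H / T)) 1 with h1 | h1
  · rw [min_eq_left h1, hF]
    have hγ : 0 < Real.sqrt (H / T) := Real.sqrt_pos.2 (by positivity)
    have hA : Real.sqrt (H / T) * T = s := by
      rw [hs, show H * T = (H / T) * T ^ 2 by field_simp,
        Real.sqrt_mul (by positivity), Real.sqrt_sq hT.le]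
    have hB : H / Real.sqrt (H / T) = s := by
      rw [div_eq_iff hγ.ne', hs, ← Real.sqrt_mul (by positivity),
        show H * T * (H / T) = H ^ 2 by field_simp, Real.sqrt_sq hH.le]
    have hC : Real.sqrt (U * H * L / Real.sqrt (H / T)) ≤ (U + 1) * s := by
      have key : U * H * L / Real.sqrt (H / T) ≤ ((U + 1) * s) ^ 2 := by
        have : U * H * L / Real.sqrt (H / T) = U * L * (H / Real.sqrt (H / T)) := by
          ring
        rw [this, hB]
        nlinarith [hs0.le, hcond, hU.le]
      calc Real.sqrt (U * H * L / Real.sqrt (H / T)) ≤ Real.sqrt (((U + 1) * s) ^ 2) :=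
            Real.sqrt_le_sqrt key
        _ = (U + 1) * s := Real.sqrt_sq (by positivity)
    refine le_trans (min_le_right _ _) ?_
    have hUH : U * H / Real.sqrt (H / T) = U * s := by
      rw [mul_div_assoc, hB]
    rw [hA, hUH]
    nlinarith [hs0.le]
  · rw [min_eq_right h1.le, hF]
    refine le_trans (min_le_left _ _) ?_
    have hHT : T ≤ H := by
      have h2 : (1 : ℝ) ≤ Real.sqrt (H / T) ^ 2 := by nlinarith
      rw [Real.sq_sqrt (by positivity)] at h2
      rw [le_div_iff₀ hT] at h2
      linarith
    have hTs : T ≤ s := by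
      rw [hs]
      calc T = Real.sqrt (T * T) := (Real.sqrt_mul_self hT.le).symm
        _ ≤ Real.sqrt (H * T) := Real.sqrt_le_sqrt (by nlinarith)
    nlinarith [hs0.le]
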